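/- arXiv:2409.04868 — 2 statements merged into one kernel-verified Lean document; each statement's English description precedes it below -/
import Mathlib

section
/- Let z ∈ ℝ^L be non-periodic and define the cones C_i(z) = {t ∈ ℝ^L : ‖t − σ_i(z)‖ < ‖t − σ_k(z)‖ for all k ≠ i}. Then σ_j(C_i(z)) = C_{i+j}(z) for all i, j (indices mod L), and the sets C_0(z), ..., C_{L−1}(z) are pairwise disjoint open sets whose union is the complement of the total discriminant Δ_z. -/
/-- Circular shift of a signal in `ℝ^L`. -/
def shift (L : ℕ) [NeZero L] (i : Fin L) (z : EuclideanSpace ℝ (Fin L)) :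
    EuclideanSpace ℝ (Fin L) := WithLp.toLp 2 (fun n => z (n - i))

/-- The open cone `C_i(z)` of points strictly closer to `σ_i(z)` than to any other shift. -/
def cone (L : ℕ) [NeZero L] (z : EuclideanSpace ℝ (Fin L)) (i : Fin L) :
    Set (EuclideanSpace ℝ (Fin L)) :=
  {t | ∀ k : Fin L, k ≠ i → ‖t - shift L i z‖ < ‖t - shift L k z‖}

/-- The discriminant `Δ_z^{i,j}`. -/
def disc (L : ℕ) [NeZero L] (z : EuclideanSpace ℝ (Fin L)) (i j : Fin L) :
    Set (EuclideanSpace ℝ (Fin L)) :=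
  {t | ‖t - shift L i z‖ = ‖t - shift L j z‖ ∧
        ∀ k : Fin L, ‖t - shift L i z‖ ≤ ‖t - shift L k z‖}

/-- The total discriminant `Δ_z`. -/
def totalDisc (L : ℕ) [NeZero L] (z : EuclideanSpace ℝ (Fin L)) :
    Set (EuclideanSpace ℝ (Fin L)) :=
  ⋃ (i : Fin L) (j : Fin L) (_ : i ≠ j), disc L z i j

lemma shift_norm (L : ℕ) [NeZero L] (j : Fin L) (x : EuclideanSpace ℝ (Fin L)) :
    ‖shift L j x‖ = ‖x‖ := by
  simp only [EuclideanSpace.norm_eq]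
  congr 1
  exact Fintype.sum_equiv (Equiv.subRight j) _ _ (fun n => rfl)

lemma shift_sub (L : ℕ) [NeZero L] (j : Fin L) (a b : EuclideanSpace ℝ (Fin L)) :
    shift L j a - shift L j b = shift L j (a - b) := by
  ext n; simp [shift]

lemma norm_shift_sub (L : ℕ) [NeZero L] (j : Fin L) (a b : EuclideanSpace ℝ (Fin L)) :
    ‖shift L j a - shift L j b‖ = ‖a - b‖ := by
  rw [shift_sub, shift_norm]

lemma shift_shift (L : ℕ) [NeZero L] (i j : Fin L) (z : EuclideanSpace ℝ (Fin L)) :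
    shift L j (shift L i z) = shift L (i + j) z := by
  ext n
  show z (n - j - i) = z (n - (i + j))
  rw [sub_sub, add_comm j i]

lemma mem_cone_shift (L : ℕ) [NeZero L] (z : EuclideanSpace ℝ (Fin L)) (i j : Fin L)
    (s : EuclideanSpace ℝ (Fin L)) (hs : s ∈ cone L z i) :
    shift L j s ∈ cone L z (i + j) := by
  intro k hk
  have hkey : ∀ m : Fin L, ‖shift L j s - shift L m z‖ = ‖s - shift L (m - j) z‖ := by
    intro m
    have : shift L m z = shift L j (shift L (m - j) z) := by
      rw [shift_shift, sub_add_cancel]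
    rw [this, norm_shift_sub]
  rw [hkey, hkey]
  have h1 : (i + j) - j = i := add_sub_cancel_right i j
  rw [h1]
  refine hs _ ?_
  intro h
  exact hk (by rw [← sub_add_cancel k j, h])

/-- The cones `C_i(z)` are permuted by shifts, pairwise disjoint, open, and their union
is the complement of the total discriminant. -/
theorem cones_partition (L : ℕ) [NeZero L] (z : EuclideanSpace ℝ (Fin L))
    (hz : ∀ k : Fin L, k ≠ 0 → shift L k z ≠ z) :
    (∀ i j : Fin L, shift L j '' cone L z i = cone L z (i + j)) ∧
    (∀ i j : Fin L, i ≠ j → Disjoint (cone L z i) (cone L z j)) ∧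
    (∀ i : Fin L, IsOpen (cone L z i)) ∧
    (⋃ i : Fin L, cone L z i) = (totalDisc L z)ᶜ := by
  refine ⟨?_, ?_, ?_, ?_⟩
  · intro i j
    ext t
    constructor
    · rintro ⟨s, hs, rfl⟩
      exact mem_cone_shift L z i j s hs
    · intro ht
      refine ⟨shift L (-j) t, ?_, ?_⟩
      · have := mem_cone_shift L z (i + j) (-j) t ht
        rwa [add_neg_cancel_right] at this
      · rw [shift_shift, neg_add_cancel]
        ext n; show t (n - 0) = t n; rw [sub_zero]
  · intro i j hij
    rw [Set.disjoint_left]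
    intro t hti htj
    have h1 := hti j (Ne.symm hij)
    have h2 := htj i hij
    exact absurd (h1.trans h2) (lt_irrefl _)
  · intro i
    have hrw : cone L z i =
        ⋂ k : Fin L, {t : EuclideanSpace ℝ (Fin L) |
          k ≠ i → ‖t - shift L i z‖ < ‖t - shift L k z‖} := by
      ext t; simp [cone, Set.mem_iInter]
    rw [hrw]
    refine isOpen_iInter_of_finite fun k => ?_
    by_cases hk : k = i
    · simp [hk]
    · have : {t : EuclideanSpace ℝ (Fin L) |
          k ≠ i → ‖t - shift L i z‖ < ‖t - shift L k z‖} =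
          {t : EuclideanSpace ℝ (Fin L) | ‖t - shift L i z‖ < ‖t - shift L k z‖} := by
        ext t; simp [hk]
      rw [this]
      exact isOpen_lt ((continuous_id.sub continuous_const).norm)
        ((continuous_id.sub continuous_const).norm)
  · ext t
    simp only [Set.mem_iUnion, Set.mem_compl_iff, totalDisc, disc, Set.mem_setOf_eq]
    constructor
    · rintro ⟨i, hi⟩ hmem
      obtain ⟨a, b, hab, heq, hmin⟩ := hmem
      by_cases ha : a = i
      · subst ha
        have hb : b ≠ a := fun h => hab h.symm
        have := hi b hb
        rw [← heq] at this
        exact lt_irrefl _ this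
      · exact absurd ((hi a ha).trans_le (hmin i)) (lt_irrefl _)
    · intro hmem
      obtain ⟨i, -, hi⟩ := Finset.exists_min_image Finset.univ
        (fun k => ‖t - shift L k z‖) ⟨0, Finset.mem_univ 0⟩
      refine ⟨i, fun k hk => ?_⟩
      have hle := hi k (Finset.mem_univ k)
      rcases lt_or_eq_of_le hle with h | h
      · exact h
      · exfalso
        apply hmem
        exact ⟨i, k, fun h' => hk h'.symm, h, fun m => hi m (Finset.mem_univ m)⟩
end

section
/- Let L be odd, let z ∈ ℝ^L be a nonzero signal with zero mean, and let u ∈ {−1,1}^L define z_u via ẑ_u = u ⊙ ẑ in the Fourier domain with u circularly symmetric (u[k] = u[−k mod L]). Then z_u ∈ ℝ^L and for every i, ‖z_u − σ_i(z)‖ = ‖z_u − σ_{−i}(z)‖ whenever z has zero Fourier phases (ẑ real-valued). -/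
/-- The discrete Fourier transform of a real signal. -/
noncomputable def dft (L : ℕ) (x : EuclideanSpace ℝ (Fin L)) (m : Fin L) : ℂ :=
  ∑ n : Fin L, (x n : ℂ) * Complex.exp (2 * Real.pi * Complex.I * (n.val : ℂ) * (m.val : ℂ) / L)

noncomputable def E (L : ℕ) (j : ℤ) : ℂ :=
  Complex.exp (2 * Real.pi * Complex.I * (j : ℂ) / L)

lemma E_add (L : ℕ) (a b : ℤ) : E L (a + b) = E L a * E L b := by
  rw [E, E, E, ← Complex.exp_add]
  congr 1
  push_cast
  ring

lemma E_zero (L : ℕ) : E L 0 = 1 := by simp [E]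

lemma E_mul_L (L : ℕ) [NeZero L] (c : ℤ) : E L (L * c) = 1 := by
  have hL : (L : ℂ) ≠ 0 := by exact_mod_cast (NeZero.ne L)
  have : (2 * (Real.pi:ℂ) * Complex.I * ((L * c : ℤ) : ℂ) / L) = (c : ℂ) * (2 * Real.pi * Complex.I) := by
    push_cast
    field_simp
  rw [E, this, Complex.exp_int_mul_two_pi_mul_I]

lemma E_congr (L : ℕ) [NeZero L] {a b : ℤ} (h : a ≡ b [ZMOD L]) : E L a = E L b := by
  obtain ⟨c, hc⟩ := h.dvd
  have : a = b + L * (-c) := by linarith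
  rw [this, E_add, E_mul_L, mul_one]

lemma E_pow (L : ℕ) (j : ℤ) (m : ℕ) : E L j ^ m = E L (j * m) := by
  rw [E, E, ← Complex.exp_nat_mul]
  congr 1
  push_cast
  ring

lemma E_ne_one (L : ℕ) [NeZero L] {j : ℤ} (hj : ¬ ((L : ℤ) ∣ j)) : E L j ≠ 1 := by
  intro h
  rw [E, Complex.exp_eq_one_iff] at h
  obtain ⟨n, hn⟩ := h
  apply hj
  refine ⟨n, ?_⟩
  have hL : (L : ℂ) ≠ 0 := by exact_mod_cast (NeZero.ne L)
  have hpi : (Real.pi : ℂ) ≠ 0 := by exact_mod_cast Real.pi_ne_zero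
  have hI := Complex.I_ne_zero
  field_simp at hn
  have h2 : (2 : ℂ) * Real.pi * Complex.I ≠ 0 := by
    simp [hpi, Complex.I_ne_zero]
  have : (j : ℂ) = (L : ℂ) * n := by
    apply mul_left_cancel₀ h2
    linear_combination (2 * (Real.pi : ℂ) * Complex.I) * hn
  exact_mod_cast this

lemma sum_E (L : ℕ) [NeZero L] {j : ℤ} (hj : ¬ ((L : ℤ) ∣ j)) :
    ∑ m : Fin L, E L (j * m.val) = 0 := by
  have : ∀ m : Fin L, E L (j * m.val) = E L j ^ (m.val) := fun m => (E_pow L j m.val).symm ▸ rfl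
  calc ∑ m : Fin L, E L (j * m.val) = ∑ m ∈ Finset.range L, E L j ^ m := by
        rw [Finset.sum_range fun m => E L j ^ m]
        exact Finset.sum_congr rfl fun m _ => by rw [E_pow]
    _ = (E L j ^ L - 1) / (E L j - 1) := geom_sum_eq (E_ne_one L hj) L
    _ = 0 := by
        rw [E_pow]
        rw [show (j * (L:ℕ) : ℤ) = (L:ℤ) * j by push_cast; ring, E_mul_L]
        simp

lemma sum_E_full (L : ℕ) [NeZero L] (a b : Fin L) :
    ∑ m : Fin L, E L (((a.val : ℤ) - b.val) * m.val) = if a = b then (L : ℂ) else 0 := by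
  by_cases h : a = b
  · subst h
    simp [E_zero]
  · rw [if_neg h]
    apply sum_E
    intro ⟨c, hc⟩
    have ha := a.isLt
    have hb := b.isLt
    have : ((a.val : ℤ) - b.val) ≠ 0 := by
      intro h0
      exact h (Fin.ext (by omega))
    have habs : |(a.val : ℤ) - b.val| < L := by rw [abs_lt]; omega
    exact this (Int.eq_zero_of_abs_lt_dvd ⟨c, hc⟩ habs)

lemma dft_eq (L : ℕ) (x : EuclideanSpace ℝ (Fin L)) (m : Fin L) :
    dft L x m = ∑ n : Fin L, (x n : ℂ) * E L ((n.val : ℤ) * m.val) := by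
  refine Finset.sum_congr rfl fun n _ => ?_
  congr 1
  rw [E]
  congr 1
  push_cast
  ring

lemma dft_inv (L : ℕ) [NeZero L] (x : EuclideanSpace ℝ (Fin L)) (n : Fin L) :
    (L : ℂ) * x n = ∑ m : Fin L, dft L x m * E L (-(n.val : ℤ) * m.val) := by
  symm
  calc ∑ m : Fin L, dft L x m * E L (-(n.val : ℤ) * m.val)
      = ∑ m : Fin L, ∑ k : Fin L, (x k : ℂ) * E L (((k.val : ℤ) - n.val) * m.val) := by
        refine Finset.sum_congr rfl fun m _ => ?_
        rw [dft_eq, Finset.sum_mul]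
        refine Finset.sum_congr rfl fun k _ => ?_
        rw [mul_assoc, ← E_add]
        congr 2
        ring
    _ = ∑ k : Fin L, (x k : ℂ) * ∑ m : Fin L, E L (((k.val : ℤ) - n.val) * m.val) := by
        rw [Finset.sum_comm]
        simp [Finset.mul_sum]
    _ = (L : ℂ) * x n := by
        rw [Finset.sum_congr rfl (fun k _ => by rw [sum_E_full])]
        simp [Finset.sum_ite_eq']
        ring

lemma conj_E (L : ℕ) (j : ℤ) : (starRingEnd ℂ) (E L j) = E L (-j) := by
  rw [E, E, ← Complex.exp_conj]
  congr 1
  simp [map_div₀, map_mul, Complex.conj_ofReal, map_ofNat]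

lemma neg_val_modeq (L : ℕ) [NeZero L] (k : Fin L) :
    (((-k : Fin L).val : ℤ)) ≡ -(k.val : ℤ) [ZMOD L] := by
  have h : ((-k) + k : Fin L) = 0 := by exact neg_add_cancel k
  have h2 : (((-k : Fin L).val + k.val) % L : ℕ) = 0 := by
    rw [← Fin.val_add, h]; rfl
  have := Nat.dvd_of_mod_eq_zero h2
  obtain ⟨c, hc⟩ := this
  have : ((-k : Fin L).val : ℤ) = -(k.val : ℤ) + L * c := by push_cast; omega
  rw [this]
  simp [Int.ModEq, Int.add_mul_emod_self_left]

lemma symm_of_real_dft (L : ℕ) [NeZero L] (x : EuclideanSpace ℝ (Fin L))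
    (h : ∀ m : Fin L, ((starRingEnd ℂ)) (dft L x m) = dft L x m) :
    ∀ n : Fin L, x (-n) = x n := by
  intro n
  have hL : (L : ℂ) ≠ 0 := by exact_mod_cast (NeZero.ne L)
  have h1 := dft_inv L x (-n)
  have h2 := dft_inv L x n
  have key : ∑ m : Fin L, dft L x m * E L (-((-n : Fin L).val : ℤ) * m.val)
      = ∑ m : Fin L, dft L x m * E L (-(n.val : ℤ) * m.val) := by
    calc ∑ m : Fin L, dft L x m * E L (-((-n : Fin L).val : ℤ) * m.val)
        = ∑ m : Fin L, dft L x m * E L ((n.val : ℤ) * m.val) := by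
          refine Finset.sum_congr rfl fun m _ => ?_
          congr 1
          apply E_congr
          exact Int.ModEq.mul ((neg_val_modeq L n).neg.trans (by simp)) Int.ModEq.rfl
      _ = (starRingEnd ℂ) (∑ m : Fin L, dft L x m * E L (-(n.val : ℤ) * m.val)) := by
          rw [map_sum]
          refine Finset.sum_congr rfl fun m _ => ?_
          rw [map_mul, h m, conj_E]
          simp
      _ = ∑ m : Fin L, dft L x m * E L (-(n.val : ℤ) * m.val) := by
          rw [← h2, map_mul]
          simp [Complex.conj_ofReal]
  have : (L : ℂ) * (x (-n) : ℂ) = (L : ℂ) * (x n : ℂ) := by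
    rw [h1, h2, key]
  have := mul_left_cancel₀ hL this
  exact_mod_cast this

/-- Sign-flipping Fourier modes of a zero-phase signal by a circularly symmetric `±1`
vector produces a signal equidistant to `σ_i(z)` and `σ_{−i}(z)` for every `i`. -/
theorem signFlip_equidistant (L : ℕ) [NeZero L] (hodd : Odd L)
    (z : EuclideanSpace ℝ (Fin L)) (hz : z ≠ 0)
    (hmean : ∑ n : Fin L, z n = 0)
    (hphase : ∀ k : Fin L, (dft L z k).im = 0)
    (u : Fin L → ℝ) (hu : ∀ k : Fin L, u k = 1 ∨ u k = -1)
    (husym : ∀ k : Fin L, u (-k) = u k)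
    (w : EuclideanSpace ℝ (Fin L)) (hw : ∀ k : Fin L, dft L w k = (u k : ℂ) * dft L z k) :
    ∀ i : Fin L, ‖w - shift L i z‖ = ‖w - shift L (-i) z‖ := by
  have hzr : ∀ m : Fin L, (starRingEnd ℂ) (dft L z m) = dft L z m :=
    fun m => Complex.conj_eq_iff_im.mpr (hphase m)
  have hwr : ∀ m : Fin L, (starRingEnd ℂ) (dft L w m) = dft L w m := by
    intro m
    rw [hw m, map_mul, hzr m, Complex.conj_ofReal]
  have hzs := symm_of_real_dft L z hzr
  have hws := symm_of_real_dft L w hwr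
  intro i
  rw [EuclideanSpace.norm_eq, EuclideanSpace.norm_eq]
  congr 1
  rw [← Equiv.sum_comp (Equiv.neg (Fin L))]
  refine Finset.sum_congr rfl fun n _ => ?_
  have h1 : (w - shift L i z) (Equiv.neg (Fin L) n) = (w - shift L (-i) z) n := by
    simp only [PiLp.sub_apply, shift, Equiv.neg_apply]
    rw [hws n]
    congr 1
    have : (-n - i : Fin L) = -(n + i) := by abel
    rw [this, hzs (n + i)]
    simp [sub_neg_eq_add]
  rw [h1]
end
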